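/- Malesevic's condition T₁: Let a < b and let f : ℝ → ℝ be differentiable at every point of [a, b]. Define φ₁ : [a, b] → ℝ by φ₁(x) = (f(x) - f(a))/(x - a) - f'(a) for x ∈ (a, b] and φ₁(a) = 0, and assume φ₁ is differentiable at b (one-sided derivative within [a, b]). If φ₁'(b) * φ₁(b) < 0, then there exists ξ ∈ (a, b) such that f'(ξ) = (f(ξ) - f(a)) / (ξ - a) (a Flett point of f). -/
import Mathlib

open Set Filter Topology

lemma malesevic_aux (f f' φ : ℝ → ℝ) (φ'b : ℝ) (a b : ℝ) (hab : a < b)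
    (hf : ∀ x ∈ Set.Icc a b, HasDerivWithinAt f (f' x) (Set.Icc a b) x)
    (hφa : φ a = 0)
    (hφ : ∀ x ∈ Set.Ioc a b, φ x = (f x - f a) / (x - a) - f' a)
    (hφ'b : HasDerivWithinAt φ φ'b (Set.Icc a b) b)
    (hneg : φ'b < 0) (hpos : 0 < φ b) :
    ∃ ξ ∈ Set.Ioo a b, f' ξ = (f ξ - f a) / (ξ - a) := by
  -- continuity of f on Icc
  have hfc : ContinuousOn f (Set.Icc a b) := fun x hx => (hf x hx).continuousWithinAt
  -- continuity of φ on Icc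
  have hφc : ContinuousOn φ (Set.Icc a b) := by
    intro x hx
    rcases eq_or_lt_of_le hx.1 with heq | hax
    · subst heq
      rw [← continuousWithinAt_diff_self]
      rw [ContinuousWithinAt, hφa]
      have hslope := hasDerivWithinAt_iff_tendsto_slope.mp (hf a hx)
      have hT : Tendsto (fun y => slope f a y - f' a) (𝓝[Set.Icc a b \ {a}] a)
          (𝓝 (f' a - f' a)) := hslope.sub tendsto_const_nhds
      rw [sub_self] at hT
      refine hT.congr' ?_
      filter_upwards [self_mem_nhdsWithin] with y hy
      have hy1 : y ∈ Set.Ioc a b := ⟨lt_of_le_of_ne hy.1.1 (Ne.symm hy.2), hy.1.2⟩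
      rw [hφ y hy1, slope_def_field]
    · have hmem : Set.Ioi a ∈ 𝓝 x := Ioi_mem_nhds hax
      rw [← continuousWithinAt_inter hmem]
      have hset : Set.Icc a b ∩ Set.Ioi a = Set.Ioc a b := by
        ext y
        simp only [Set.mem_inter_iff, Set.mem_Icc, Set.mem_Ioc, Set.mem_Ioi]
        constructor
        · rintro ⟨⟨_, h2⟩, h3⟩; exact ⟨h3, h2⟩
        · rintro ⟨h1, h2⟩; exact ⟨⟨le_of_lt h1, h2⟩, h1⟩
      rw [hset]
      have hg : ContinuousWithinAt (fun y => (f y - f a) / (y - a) - f' a)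
          (Set.Ioc a b) x := by
        apply ContinuousWithinAt.sub _ continuousWithinAt_const
        apply ContinuousWithinAt.div
        · exact ((hfc x hx).mono Set.Ioc_subset_Icc_self).sub continuousWithinAt_const
        · exact (continuousWithinAt_id.sub continuousWithinAt_const)
        · exact sub_ne_zero.mpr (ne_of_gt hax)
      exact hg.congr (fun y hy => hφ y hy) (hφ x ⟨hax, hx.2⟩)
  -- find x < b with φ x > φ b
  have hnb0 : (𝓝[Set.Ico a b] b).NeBot := by
    rw [← mem_closure_iff_nhdsWithin_neBot, closure_Ico (ne_of_lt hab)]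
    exact ⟨le_of_lt hab, le_refl b⟩
  have hnb : (𝓝[Set.Icc a b \ {b}] b).NeBot := by
    refine Filter.neBot_of_le (f := 𝓝[Set.Ico a b] b) ?_
    apply nhdsWithin_mono
    intro y hy; exact ⟨⟨hy.1, le_of_lt hy.2⟩, ne_of_lt hy.2⟩
  have hslopeb := hasDerivWithinAt_iff_tendsto_slope.mp hφ'b
  have hev : ∀ᶠ y in 𝓝[Set.Icc a b \ {b}] b, slope φ b y < 0 :=
    hslopeb.eventually (eventually_lt_nhds hneg)
  obtain ⟨x, hx1, hx2⟩ := (hev.and self_mem_nhdsWithin).exists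
  have hxb : x < b := lt_of_le_of_ne hx2.1.2 hx2.2
  have hφx : φ b < φ x := by
    rw [slope_def_field] at hx1
    have hxb' : x - b < 0 := by linarith
    rcases div_neg_iff.mp hx1 with ⟨h, h'⟩ | ⟨h, h'⟩ <;> linarith
  -- max of φ on Icc
  obtain ⟨ξ, hξmem, hξmax⟩ := isCompact_Icc.exists_isMaxOn
    (Set.nonempty_Icc.mpr (le_of_lt hab)) hφc
  have hξx : φ x ≤ φ ξ := hξmax hx2.1
  have hξb : ξ ≠ b := by
    intro h; rw [h] at hξx; linarith
  have hξa : ξ ≠ a := by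
    intro h; rw [h, hφa] at hξx; linarith
  have hξIoo : ξ ∈ Set.Ioo a b :=
    ⟨lt_of_le_of_ne hξmem.1 (Ne.symm hξa), lt_of_le_of_ne hξmem.2 hξb⟩
  have hξa' : ξ - a ≠ 0 := sub_ne_zero.mpr (ne_of_gt hξIoo.1)
  -- derivative of φ at ξ
  have hfd : HasDerivAt f (f' ξ) ξ :=
    (hf ξ hξmem).hasDerivAt (Icc_mem_nhds hξIoo.1 hξIoo.2)
  have hgd : HasDerivAt (fun y => (f y - f a) / (y - a) - f' a)
      ((f' ξ * (ξ - a) - (f ξ - f a) * 1) / (ξ - a) ^ 2) ξ := by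
    exact ((hfd.sub_const (f a)).div ((hasDerivAt_id ξ).sub_const a) hξa').sub_const (f' a)
  have hφd : HasDerivAt φ ((f' ξ * (ξ - a) - (f ξ - f a) * 1) / (ξ - a) ^ 2) ξ := by
    apply hgd.congr_of_eventuallyEq
    filter_upwards [Ioo_mem_nhds hξIoo.1 hξIoo.2] with y hy
    exact hφ y ⟨hy.1, le_of_lt hy.2⟩
  have hloc : IsLocalMax φ ξ := hξmax.isLocalMax (Icc_mem_nhds hξIoo.1 hξIoo.2)
  have hzero := hloc.hasDerivAt_eq_zero hφd
  refine ⟨ξ, hξIoo, ?_⟩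
  have h2 : (ξ - a) ^ 2 ≠ 0 := pow_ne_zero _ hξa'
  rw [div_eq_zero_iff] at hzero
  rcases hzero with h | h
  · field_simp
    linarith
  · exact absurd h h2

/-- Malesevic's condition T₁ for the existence of a Flett point. -/
theorem malesevic_condition_T1 (f f' φ : ℝ → ℝ) (φ'b : ℝ) (a b : ℝ) (hab : a < b)
    (hf : ∀ x ∈ Set.Icc a b, HasDerivWithinAt f (f' x) (Set.Icc a b) x)
    (hφa : φ a = 0)
    (hφ : ∀ x ∈ Set.Ioc a b, φ x = (f x - f a) / (x - a) - f' a)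
    (hφ'b : HasDerivWithinAt φ φ'b (Set.Icc a b) b)
    (hT1 : φ'b * φ b < 0) :
    ∃ ξ ∈ Set.Ioo a b, f' ξ = (f ξ - f a) / (ξ - a) := by
  rcases mul_neg_iff.mp hT1 with ⟨h1, h2⟩ | ⟨h1, h2⟩
  · -- φ'b > 0, φ b < 0 : apply aux to negations
    obtain ⟨ξ, hξ, heq⟩ := malesevic_aux (fun x => -f x) (fun x => -f' x) (fun x => -φ x)
      (-φ'b) a b hab
      (fun x hx => (hf x hx).neg)
      (by simp [hφa])
      (fun x hx => by show -φ x = _; rw [hφ x hx]; ring)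
      hφ'b.neg (by simpa using h1) (by show (0:ℝ) < -φ b; linarith)
    refine ⟨ξ, hξ, ?_⟩
    have hξa' : ξ - a ≠ 0 := sub_ne_zero.mpr (ne_of_gt hξ.1)
    field_simp at heq ⊢
    linarith
  · exact malesevic_aux f f' φ φ'b a b hab hf hφa hφ hφ'b h1 h2
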